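/- Consider a distributed estimation system in which the fusion center makes no observation, the parameter θ has prior density p_Θ, a hidden variable λ has conditional density p_Λ(λ|θ), and the sensor observations Y_1, …, Y_N are conditionally independent given λ with densities p_i(y_i|λ) (hierarchical conditional independence), though possibly dependent given θ. Fix i and fix measurable quantizers γ_j : 𝒴_j → {1,…,D_j} for all j ≠ i. Define, for each θ, λ, and d ∈ {1,…,D_i}, a(θ, λ, d) = E[C(γ_0(U_1,…,U_{i−1}, d, U_{i+1},…,U_N), U_1,…,U_{i−1}, d, U_{i+1},…,U_N, θ) | θ, λ], where U_j = γ_j(Y_j). Then γ_i minimizes the Bayes risk J(γ) = E[C(γ_0(γ_1(Y_1),…,γ_N(Y_N)), γ_1(Y_1),…,γ_N(Y_N), θ)] over all measurable quantizers 𝒴_i → {1,…,D_i} only if, for almost every y_i with respect to the marginal distribution of Y_i, γ_i(y_i) minimizes d ↦ ∫∫ a(θ, λ, d)·p_Θ(θ)·p_Λ(λ|θ)·p_i(y_i|λ) dν_Θ(θ) dν_Λ(λ) over d ∈ {1,…,D_i}. -/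

import Mathlib

open MeasureTheory

section AuxEquiv

variable {Θ Λ : Type*} [MeasurableSpace Θ] [MeasurableSpace Λ]
  {N : ℕ} (𝒴 : Fin N → Type*) [∀ j, MeasurableSpace (𝒴 j)]
  (νΘ : Measure Θ) (νΛ : Measure Λ) (ν : ∀ j, Measure (𝒴 j))
  [SigmaFinite νΘ] [SigmaFinite νΛ] [∀ j, SigmaFinite (ν j)] (i : Fin N)

/-- Split a product of spaces at coordinate `i`. -/
noncomputable def splitAt : (∀ j, 𝒴 j) ≃ᵐ 𝒴 i × ∀ j : {j : Fin N // ¬ j = i}, 𝒴 j :=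
  (MeasurableEquiv.piEquivPiSubtypeProd 𝒴 (· = i)).trans
    ((MeasurableEquiv.piUnique fun j : {j : Fin N // j = i} => 𝒴 j).prodCongr
      (MeasurableEquiv.refl _))

theorem splitAt_mp : MeasurePreserving (splitAt 𝒴 i) (Measure.pi ν)
    ((ν i).prod (Measure.pi fun j : {j : Fin N // ¬ j = i} => ν j)) := by
  refine (measurePreserving_piEquivPiSubtypeProd ν (· = i)).trans
    (MeasurePreserving.prod ?_ (.id _))
  have h := measurePreserving_piUnique (fun j : {j : Fin N // j = i} => ν j)
  convert h using 2 <;> rfl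

theorem splitAt_symm_apply_i (y : 𝒴 i) (r : ∀ j : {j : Fin N // ¬ j = i}, 𝒴 j) :
    (splitAt 𝒴 i).symm (y, r) i = y := by
  show ((Equiv.piEquivPiSubtypeProd (· = i) 𝒴).symm
      (((Equiv.piUnique fun j : {j : Fin N // j = i} => 𝒴 j).symm.prodCongr
        (Equiv.refl _)) (y, r))) i = y
  simp [Equiv.piEquivPiSubtypeProd_symm_apply]
  rfl

theorem splitAt_symm_apply_ne (y : 𝒴 i) (r : ∀ j : {j : Fin N // ¬ j = i}, 𝒴 j)
    (j : Fin N) (h : ¬ j = i) :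
    (splitAt 𝒴 i).symm (y, r) j = r ⟨j, h⟩ := by
  show ((Equiv.piEquivPiSubtypeProd (· = i) 𝒴).symm
      (((Equiv.piUnique fun j : {j : Fin N // j = i} => 𝒴 j).symm.prodCongr
        (Equiv.refl _)) (y, r))) j = r ⟨j, h⟩
  simp [Equiv.piEquivPiSubtypeProd_symm_apply, h]

/-- Cyclic shuffle `A × (B × G) ≃ᵐ B × (A × G)`. -/
noncomputable def cycEquiv (A B G : Type*) [MeasurableSpace A] [MeasurableSpace B]
    [MeasurableSpace G] : A × (B × G) ≃ᵐ B × (A × G) :=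
  (MeasurableEquiv.prodAssoc.symm.trans
    (((MeasurableEquiv.prodComm : A × B ≃ᵐ B × A)).prodCongr (MeasurableEquiv.refl G))).trans
    MeasurableEquiv.prodAssoc

theorem cycEquiv_mp {A B G : Type*} [MeasurableSpace A] [MeasurableSpace B] [MeasurableSpace G]
    (μA : Measure A) (μB : Measure B) (μG : Measure G)
    [SigmaFinite μA] [SigmaFinite μB] [SigmaFinite μG] :
    MeasurePreserving (cycEquiv A B G) (μA.prod (μB.prod μG)) (μB.prod (μA.prod μG)) := by
  have h1 : MeasurePreserving (MeasurableEquiv.prodAssoc.symm : A × (B × G) ≃ᵐ (A × B) × G)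
      (μA.prod (μB.prod μG)) ((μA.prod μB).prod μG) :=
    (measurePreserving_prodAssoc μA μB μG).symm _
  have h2 : MeasurePreserving
      (((MeasurableEquiv.prodComm : A × B ≃ᵐ B × A)).prodCongr (MeasurableEquiv.refl G))
      ((μA.prod μB).prod μG) ((μB.prod μA).prod μG) :=
    (Measure.measurePreserving_swap).prod (.id _)
  have h3 : MeasurePreserving (MeasurableEquiv.prodAssoc : (B × A) × G ≃ᵐ B × (A × G))
      ((μB.prod μA).prod μG) (μB.prod (μA.prod μG)) := measurePreserving_prodAssoc μB μA μG
  exact (h1.trans h2).trans h3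

/-- The shuffle bringing coordinate `i` of the observations to the front. -/
noncomputable def shuffle : (𝒴 i) × (Θ × (Λ × (∀ j : {j : Fin N // ¬ j = i}, 𝒴 j)))
    ≃ᵐ Θ × (Λ × (∀ j, 𝒴 j)) :=
  ((cycEquiv (𝒴 i) Θ _).trans ((MeasurableEquiv.refl Θ).prodCongr (cycEquiv (𝒴 i) Λ _))).trans
    ((MeasurableEquiv.refl Θ).prodCongr ((MeasurableEquiv.refl Λ).prodCongr (splitAt 𝒴 i).symm))

theorem shuffle_mp : MeasurePreserving (shuffle (Θ := Θ) (Λ := Λ) 𝒴 i)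
    ((ν i).prod (νΘ.prod (νΛ.prod (Measure.pi fun j : {j : Fin N // ¬ j = i} => ν j))))
    (νΘ.prod (νΛ.prod (Measure.pi ν))) := by
  have h1 := cycEquiv_mp (μA := ν i) (μB := νΘ)
    (μG := νΛ.prod (Measure.pi fun j : {j : Fin N // ¬ j = i} => ν j))
  have h2 : MeasurePreserving
      ((MeasurableEquiv.refl Θ).prodCongr (cycEquiv (𝒴 i) Λ (∀ j : {j : Fin N // ¬ j = i}, 𝒴 j)))
      (νΘ.prod ((ν i).prod (νΛ.prod (Measure.pi fun j : {j : Fin N // ¬ j = i} => ν j))))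
      (νΘ.prod (νΛ.prod ((ν i).prod (Measure.pi fun j : {j : Fin N // ¬ j = i} => ν j)))) :=
    (MeasurePreserving.id _).prod (cycEquiv_mp _ _ _)
  have h3 : MeasurePreserving
      ((MeasurableEquiv.refl Θ).prodCongr
        ((MeasurableEquiv.refl Λ).prodCongr (splitAt 𝒴 i).symm))
      (νΘ.prod (νΛ.prod ((ν i).prod (Measure.pi fun j : {j : Fin N // ¬ j = i} => ν j))))
      (νΘ.prod (νΛ.prod (Measure.pi ν))) :=
    (MeasurePreserving.id _).prod ((MeasurePreserving.id _).prod ((splitAt_mp 𝒴 ν i).symm _))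
  exact (h1.trans h2).trans h3

theorem shuffle_apply (y : 𝒴 i) (θ : Θ) (l : Λ) (r : ∀ j : {j : Fin N // ¬ j = i}, 𝒴 j) :
    (shuffle (Θ := Θ) (Λ := Λ) 𝒴 i) (y, (θ, (l, r))) = (θ, (l, (splitAt 𝒴 i).symm (y, r))) := rfl

end AuxEquiv

/-- In the hierarchical conditional independence model (the fusion
center makes no observation; the sensor observations `Y_1,…,Y_N` are conditionally
independent given the hidden variable `λ`, though possibly dependent given `θ`),
with fixed measurable quantizers `γ_j` for `j ≠ i`, the quantizer `γ_i` minimizes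
the Bayes risk only if, for a.e. `y_i` w.r.t. the marginal distribution of `Y_i`,
`γ_i(y_i)` minimizes `d ↦ ∫∫ a(θ,λ,d) pΘ(θ) pΛ(λ|θ) p_i(y_i|λ) dνΘ dνΛ`. -/
theorem necessary_condition_optimal_quantizer_dependent
    {Θ Λ : Type*} [MeasurableSpace Θ] [MeasurableSpace Λ]
    {N : ℕ} (𝒴 : Fin N → Type*) [∀ j, MeasurableSpace (𝒴 j)]
    (νΘ : Measure Θ) (νΛ : Measure Λ) (ν : ∀ j, Measure (𝒴 j))
    [SigmaFinite νΘ] [SigmaFinite νΛ] [∀ j, SigmaFinite (ν j)]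
    -- prior density of θ and conditional density of the hidden variable λ given θ
    (pΘ : Θ → ℝ) (hpΘ_nn : ∀ θ, 0 ≤ pΘ θ) (hpΘ_meas : Measurable pΘ)
    (hpΘ_prob : ∫ θ, pΘ θ ∂νΘ = 1)
    (pΛ : Θ → Λ → ℝ) (hpΛ_nn : ∀ θ l, 0 ≤ pΛ θ l)
    (hpΛ_meas : Measurable fun q : Θ × Λ => pΛ q.1 q.2)
    (hpΛ_prob : ∀ θ, ∫ l, pΛ θ l ∂νΛ = 1)
    -- conditional densities of the observations given λ (HCI)
    (p : ∀ j, Λ → 𝒴 j → ℝ) (hp_nn : ∀ j l y, 0 ≤ p j l y)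
    (hp_meas : ∀ j, Measurable fun q : Λ × 𝒴 j => p j q.1 q.2)
    (hp_prob : ∀ j l, ∫ y, p j l y ∂(ν j) = 1)
    -- numbers of quantization levels, estimator and cost function
    (D : Fin N → ℕ) (hD : ∀ j, 0 < D j)
    (γ₀ : (∀ j, Fin (D j)) → Θ)
    (C : Θ → (∀ j, Fin (D j)) → Θ → ℝ)
    (hC_meas : ∀ u, Measurable fun q : Θ × Θ => C q.1 u q.2)
    -- the strategy, with quantizers γ_j fixed for j ≠ i
    (γ : ∀ j, 𝒴 j → Fin (D j)) (hγ_meas : ∀ j, Measurable (γ j))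
    (i : Fin N)
    -- all integrals are finite
    (hInt : ∀ γ' : ∀ j, 𝒴 j → Fin (D j), (∀ j, Measurable (γ' j)) →
      Integrable
        (fun q : Θ × Λ × (∀ j, 𝒴 j) =>
          C (γ₀ fun j => γ' j (q.2.2 j)) (fun j => γ' j (q.2.2 j)) q.1
            * (pΘ q.1 * pΛ q.1 q.2.1 * ∏ j, p j q.2.1 (q.2.2 j)))
        (νΘ.prod (νΛ.prod (Measure.pi ν))))
    -- the Bayes risk
    (J : (∀ j, 𝒴 j → Fin (D j)) → ℝ)
    (hJ : ∀ γ' : ∀ j, 𝒴 j → Fin (D j),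
      J γ' = ∫ θ, ∫ l, ∫ y,
        C (γ₀ fun j => γ' j (y j)) (fun j => γ' j (y j)) θ
          * (pΘ θ * pΛ θ l * ∏ j, p j l (y j)) ∂(Measure.pi ν) ∂νΛ ∂νΘ)
    -- a(θ, λ, d): conditional expectation of the cost given (θ, λ), with d at slot i
    (a : Θ → Λ → Fin (D i) → ℝ)
    (ha : ∀ θ l d, a θ l d = ∫ y,
      C (γ₀ (Function.update (fun j => γ j (y j)) i d))
          (Function.update (fun j => γ j (y j)) i d) θ
        * ∏ j, p j l (y j) ∂(Measure.pi ν))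
    -- γ_i minimizes the Bayes risk over all measurable quantizers at sensor i
    (hmin : ∀ δ : 𝒴 i → Fin (D i), Measurable δ → J γ ≤ J (Function.update γ i δ)) :
    -- necessary condition: a.e. pointwise minimization w.r.t. the marginal of Y_i
    ∀ᵐ yᵢ ∂((ν i).withDensity fun y =>
        ENNReal.ofReal (∫ θ, ∫ l, pΘ θ * pΛ θ l * p i l y ∂νΛ ∂νΘ)),
      ∀ d : Fin (D i),
        (∫ θ, ∫ l, a θ l (γ i yᵢ) * (pΘ θ * pΛ θ l * p i l yᵢ) ∂νΛ ∂νΘ)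
          ≤ ∫ θ, ∫ l, a θ l d * (pΘ θ * pΛ θ l * p i l yᵢ) ∂νΛ ∂νΘ := by
  classical
  refine Filter.Eventually.filter_mono
    ((withDensity_absolutelyContinuous (ν i) _).ae_le) ?_
  by_cases hne : Nonempty (𝒴 i)
  swap
  · exact Filter.Eventually.of_forall fun y => absurd ⟨y⟩ hne
  obtain ⟨y₀⟩ := hne
  -- notation
  set μrest : Measure (∀ j : {j : Fin N // ¬ j = i}, 𝒴 j) :=
    Measure.pi (fun j : {j : Fin N // ¬ j = i} => ν j) with hμrest
  set F : 𝒴 i → Fin (D i) → ℝ :=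
    fun y d => ∫ θ, ∫ l, a θ l d * (pΘ θ * pΛ θ l * p i l y) ∂νΛ ∂νΘ with hF
  set vv : Fin (D i) → (∀ j : {j : Fin N // ¬ j = i}, 𝒴 j) → ∀ j, Fin (D j) :=
    fun d r => Function.update (fun j => γ j ((splitAt 𝒴 i).symm (y₀, r) j)) i d with hvvdef
  -- the product of densities splits at i
  have hsplit : ∀ (l : Λ) (y : 𝒴 i) (r : ∀ j : {j : Fin N // ¬ j = i}, 𝒴 j),
      (∏ j, p j l ((splitAt 𝒴 i).symm (y, r) j))
        = p i l y * ∏ j : {j : Fin N // ¬ j = i}, p j.1 l (r j) := by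
    intro l y r
    rw [← Finset.mul_prod_erase Finset.univ
      (fun j => p j l ((splitAt 𝒴 i).symm (y, r) j)) (Finset.mem_univ i),
      splitAt_symm_apply_i]
    congr 1
    rw [Finset.prod_subtype (Finset.univ.erase i)
      (show ∀ x : Fin N, x ∈ Finset.univ.erase i ↔ ¬ x = i by intro x; simp [Finset.mem_erase])
      (fun j => p j l ((splitAt 𝒴 i).symm (y, r) j))]
    exact Finset.prod_congr rfl fun j _ => by rw [splitAt_symm_apply_ne 𝒴 i y r j.1 j.2]
  -- the updated quantizer outputs only depend on the coordinates away from i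
  have hvv : ∀ (y : 𝒴 i) (r : ∀ j : {j : Fin N // ¬ j = i}, 𝒴 j) (d : Fin (D i)),
      Function.update (fun j => γ j ((splitAt 𝒴 i).symm (y, r) j)) i d = vv d r := by
    intro y r d
    funext j
    by_cases hj : j = i
    · subst hj
      simp only [hvvdef, Function.update_self]
    · simp only [hvvdef, Function.update_of_ne hj,
        splitAt_symm_apply_ne 𝒴 i y r j hj, splitAt_symm_apply_ne 𝒴 i y₀ r j hj]
  -- identification of a θ l d as an integral over the remaining coordinates
  have hA : ∀ (θ : Θ) (l : Λ) (d : Fin (D i)), a θ l d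
      = ∫ r, C (γ₀ (vv d r)) (vv d r) θ
          * ∏ j : {j : Fin N // ¬ j = i}, p j.1 l (r j) ∂μrest := by
    intro θ l d
    have hcomp := ((splitAt_mp 𝒴 ν i).symm (splitAt 𝒴 i)).integral_comp
      (splitAt 𝒴 i).symm.measurableEmbedding
      (fun y : ∀ j, 𝒴 j =>
        C (γ₀ (Function.update (fun j => γ j (y j)) i d))
          (Function.update (fun j => γ j (y j)) i d) θ * ∏ j, p j l (y j))
    rw [ha θ l d, ← hcomp]
    have hptwise : ∀ z : (𝒴 i) × (∀ j : {j : Fin N // ¬ j = i}, 𝒴 j),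
        C (γ₀ (Function.update (fun j => γ j ((splitAt 𝒴 i).symm z j)) i d))
            (Function.update (fun j => γ j ((splitAt 𝒴 i).symm z j)) i d) θ
          * ∏ j, p j l ((splitAt 𝒴 i).symm z j)
        = p i l z.1 * (C (γ₀ (vv d z.2)) (vv d z.2) θ
            * ∏ j : {j : Fin N // ¬ j = i}, p j.1 l (z.2 j)) := by
      rintro ⟨y, r⟩
      rw [hvv y r d, hsplit l y r]
      ring
    calc ∫ z, C (γ₀ (Function.update (fun j => γ j ((splitAt 𝒴 i).symm z j)) i d))
            (Function.update (fun j => γ j ((splitAt 𝒴 i).symm z j)) i d) θ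
          * ∏ j, p j l ((splitAt 𝒴 i).symm z j) ∂((ν i).prod μrest)
        = ∫ z, p i l z.1 * (C (γ₀ (vv d z.2)) (vv d z.2) θ
            * ∏ j : {j : Fin N // ¬ j = i}, p j.1 l (z.2 j)) ∂((ν i).prod μrest) :=
          integral_congr_ae (Filter.Eventually.of_forall hptwise)
      _ = (∫ y, p i l y ∂(ν i)) * ∫ r, C (γ₀ (vv d r)) (vv d r) θ
            * ∏ j : {j : Fin N // ¬ j = i}, p j.1 l (r j) ∂μrest :=
          integral_prod_mul (μ := ν i) (ν := μrest) (fun y => p i l y)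
            (fun r => C (γ₀ (vv d r)) (vv d r) θ
              * ∏ j : {j : Fin N // ¬ j = i}, p j.1 l (r j))
      _ = ∫ r, C (γ₀ (vv d r)) (vv d r) θ
            * ∏ j : {j : Fin N // ¬ j = i}, p j.1 l (r j) ∂μrest := by
          rw [hp_prob i l, one_mul]
  -- KEY LEMMA: the Bayes risk of an updated strategy as an integral of F
  have key : ∀ δ : 𝒴 i → Fin (D i), Measurable δ →
      J (Function.update γ i δ) = (∫ y, F y (δ y) ∂(ν i))
        ∧ Integrable (fun y => F y (δ y)) (ν i) := by
    intro δ hδ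
    set γ' := Function.update γ i δ with hγ'
    have hγ'm : ∀ j, Measurable (γ' j) := by
      intro j
      by_cases hj : j = i
      · subst hj; simpa [hγ', Function.update_self] using hδ
      · simpa [hγ', Function.update_of_ne hj] using hγ_meas j
    have hI := hInt γ' hγ'm
    set f' : Θ × Λ × (∀ j, 𝒴 j) → ℝ := fun q =>
      C (γ₀ fun j => γ' j (q.2.2 j)) (fun j => γ' j (q.2.2 j)) q.1
        * (pΘ q.1 * pΛ q.1 q.2.1 * ∏ j, p j q.2.1 (q.2.2 j)) with hf'
    -- Step A: the Bayes risk as an integral over the triple product measure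
    have hJ3 : J γ' = ∫ q, f' q ∂(νΘ.prod (νΛ.prod (Measure.pi ν))) := by
      rw [hJ γ', integral_prod _ hI]
      refine (integral_congr_ae ?_).symm
      filter_upwards [hI.prod_right_ae] with θ hθ
      exact integral_prod _ hθ
    -- Step B: transport along the shuffle
    have hmp := shuffle_mp (Θ := Θ) (Λ := Λ) 𝒴 νΘ νΛ ν i
    have hIc : Integrable (fun z => f' ((shuffle (Θ := Θ) (Λ := Λ) 𝒴 i) z))
        ((ν i).prod (νΘ.prod (νΛ.prod μrest))) :=
      (hmp.integrable_comp_emb (shuffle 𝒴 i).measurableEmbedding).2 hI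
    have hcomp : ∫ q, f' q ∂(νΘ.prod (νΛ.prod (Measure.pi ν)))
        = ∫ z, f' ((shuffle (Θ := Θ) (Λ := Λ) 𝒴 i) z) ∂((ν i).prod (νΘ.prod (νΛ.prod μrest))) :=
      (hmp.integral_comp (shuffle 𝒴 i).measurableEmbedding f').symm
    -- Step C: the section integral equals F y (δ y) for a.e. y
    have hu : ∀ (y : 𝒴 i) (r : ∀ j : {j : Fin N // ¬ j = i}, 𝒴 j),
        (fun j => γ' j ((splitAt 𝒴 i).symm (y, r) j)) = vv (δ y) r := by
      intro y r
      funext j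
      by_cases hj : j = i
      · subst hj
        simp only [hγ', hvvdef, Function.update_self, splitAt_symm_apply_i]
      · simp only [hγ', hvvdef, Function.update_of_ne hj,
          splitAt_symm_apply_ne 𝒴 i y r j hj, splitAt_symm_apply_ne 𝒴 i y₀ r j hj]
    have hEq1 : ∀ᵐ y ∂(ν i),
        (∫ w, f' ((shuffle (Θ := Θ) (Λ := Λ) 𝒴 i) (y, w)) ∂(νΘ.prod (νΛ.prod μrest)))
          = F y (δ y) := by
      filter_upwards [hIc.prod_right_ae] with y hy
      rw [integral_prod _ hy]
      refine integral_congr_ae ?_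
      filter_upwards [hy.prod_right_ae] with θ hθ
      rw [integral_prod _ hθ]
      refine integral_congr_ae (Filter.Eventually.of_forall fun l => ?_)
      calc ∫ r, f' ((shuffle (Θ := Θ) (Λ := Λ) 𝒴 i) (y, (θ, (l, r)))) ∂μrest
          = ∫ r, (C (γ₀ (vv (δ y) r)) (vv (δ y) r) θ
              * ∏ j : {j : Fin N // ¬ j = i}, p j.1 l (r j))
              * (pΘ θ * pΛ θ l * p i l y) ∂μrest := by
            refine integral_congr_ae (Filter.Eventually.of_forall fun r => ?_)
            show f' (θ, (l, (splitAt 𝒴 i).symm (y, r))) = _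
            rw [hf']
            simp only
            rw [hu y r, hsplit l y r]
            ring
        _ = (∫ r, C (γ₀ (vv (δ y) r)) (vv (δ y) r) θ
              * ∏ j : {j : Fin N // ¬ j = i}, p j.1 l (r j) ∂μrest)
              * (pΘ θ * pΛ θ l * p i l y) := integral_mul_const _ _
        _ = a θ l (δ y) * (pΘ θ * pΛ θ l * p i l y) := by rw [← hA θ l (δ y)]
    constructor
    · rw [hJ3, hcomp, integral_prod _ hIc]
      exact integral_congr_ae hEq1
    · exact (hIc.integral_prod_left).congr hEq1
  -- measurability of F
  have hUmeas : ∀ d : Fin (D i),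
      Measurable fun y : ∀ j, 𝒴 j => Function.update (fun j => γ j (y j)) i d := by
    intro d
    refine measurable_pi_lambda _ fun j => ?_
    by_cases hj : j = i
    · subst hj
      simp only [Function.update_self]
      exact measurable_const
    · simp only [Function.update_of_ne hj]
      exact (hγ_meas j).comp (measurable_pi_apply j)
  have hgmeas : ∀ d : Fin (D i), Measurable fun q : (Θ × Λ) × (∀ j, 𝒴 j) =>
      C (γ₀ (Function.update (fun j => γ j (q.2 j)) i d))
        (Function.update (fun j => γ j (q.2 j)) i d) q.1.1
        * ∏ j, p j q.1.2 (q.2 j) := by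
    intro d
    apply Measurable.mul
    · have hrw : (fun q : (Θ × Λ) × (∀ j, 𝒴 j) =>
          C (γ₀ (Function.update (fun j => γ j (q.2 j)) i d))
            (Function.update (fun j => γ j (q.2 j)) i d) q.1.1)
          = fun q => ∑ u₀ : ∀ j, Fin (D j),
              if Function.update (fun j => γ j (q.2 j)) i d = u₀
              then C (γ₀ u₀) u₀ q.1.1 else 0 := by
        funext q
        simp [Finset.sum_ite_eq]
      rw [hrw]
      refine Finset.measurable_sum _ fun u₀ _ => ?_
      refine Measurable.ite ?_ ?_ measurable_const
      · exact ((hUmeas d).comp measurable_snd) (measurableSet_singleton u₀)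
      · exact (hC_meas u₀).comp (measurable_const.prodMk (measurable_fst.fst))
    · refine Finset.measurable_prod _ fun j _ => ?_
      exact (hp_meas j).comp
        ((measurable_fst.snd).prodMk ((measurable_pi_apply j).comp measurable_snd))
  have ham : ∀ d : Fin (D i), Measurable fun q : Θ × Λ => a q.1 q.2 d := by
    intro d
    have h1 : (fun q : Θ × Λ => a q.1 q.2 d)
        = fun q : Θ × Λ => ∫ y,
            C (γ₀ (Function.update (fun j => γ j (y j)) i d))
              (Function.update (fun j => γ j (y j)) i d) q.1
              * ∏ j, p j q.2 (y j) ∂(Measure.pi ν) := by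
      funext q
      exact ha q.1 q.2 d
    rw [h1]
    exact ((hgmeas d).stronglyMeasurable.integral_prod_right').measurable
  have hFm : ∀ d : Fin (D i), Measurable fun y => F y d := by
    intro d
    have h1 : Measurable (fun q : (𝒴 i × Θ) × Λ =>
        a q.1.2 q.2 d * (pΘ q.1.2 * pΛ q.1.2 q.2 * p i q.2 q.1.1)) := by
      refine ((ham d).comp ((measurable_fst.snd).prodMk measurable_snd)).mul ?_
      refine Measurable.mul (Measurable.mul ?_ ?_) ?_
      · exact hpΘ_meas.comp measurable_fst.snd
      · exact hpΛ_meas.comp ((measurable_fst.snd).prodMk measurable_snd)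
      · exact (hp_meas i).comp (measurable_snd.prodMk measurable_fst.fst)
    have h2 : StronglyMeasurable (fun q : 𝒴 i × Θ =>
        ∫ l, a q.2 l d * (pΘ q.2 * pΛ q.2 l * p i l q.1) ∂νΛ) :=
      h1.stronglyMeasurable.integral_prod_right'
    have h3 : StronglyMeasurable (fun y : 𝒴 i =>
        ∫ θ, ∫ l, a θ l d * (pΘ θ * pΛ θ l * p i l y) ∂νΛ ∂νΘ) :=
      h2.integral_prod_right'
    exact h3.measurable
  have hFγ : Measurable fun y => F y (γ i y) := by
    have h1 : (fun y => F y (γ i y))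
        = fun y => ∑ d : Fin (D i), if γ i y = d then F y d else 0 := by
      funext y
      simp [Finset.sum_ite_eq]
    rw [h1]
    refine Finset.measurable_sum _ fun d _ => ?_
    exact Measurable.ite ((hγ_meas i) (measurableSet_singleton d)) (hFm d) measurable_const
  -- the exchange argument, one alternative d at a time
  have main : ∀ᵐ y ∂(ν i), ∀ d : Fin (D i), F y (γ i y) ≤ F y d := by
    rw [ae_all_iff]
    intro d
    set δ : 𝒴 i → Fin (D i) := fun y => if F y d < F y (γ i y) then d else γ i y with hδdef
    have hδm : Measurable δ :=
      Measurable.ite (measurableSet_lt (hFm d) hFγ) measurable_const (hγ_meas i)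
    have hK := key δ hδm
    have hKγ := key (γ i) (hγ_meas i)
    rw [Function.update_eq_self] at hKγ
    have hle : ∀ y, F y (δ y) ≤ F y (γ i y) := by
      intro y
      by_cases h : F y d < F y (γ i y)
      · simp only [hδdef, if_pos h]
        exact le_of_lt h
      · simp only [hδdef, if_neg h]
        exact le_rfl
    have h1 : ∫ y, F y (γ i y) ∂(ν i) ≤ ∫ y, F y (δ y) ∂(ν i) := by
      rw [← hKγ.1, ← hK.1]
      exact hmin δ hδm
    have h2 : ∫ y, F y (δ y) ∂(ν i) ≤ ∫ y, F y (γ i y) ∂(ν i) :=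
      integral_mono hK.2 hKγ.2 hle
    have hzero : ∫ y, (F y (γ i y) - F y (δ y)) ∂(ν i) = 0 := by
      rw [integral_sub hKγ.2 hK.2]
      linarith
    have hae : (fun y => F y (γ i y) - F y (δ y)) =ᵐ[ν i] 0 := by
      refine (integral_eq_zero_iff_of_nonneg ?_ (hKγ.2.sub hK.2)).1 hzero
      intro y
      simpa using hle y
    filter_upwards [hae] with y hy
    by_contra hcon
    push_neg at hcon
    have hδy : δ y = d := if_pos hcon
    have hy' : F y (γ i y) - F y (δ y) = 0 := hy
    rw [hδy] at hy'
    linarith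
  exact main
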